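/- Let K be a field with at least 3 elements and n ≥ 2. Then the Lie algebra gl_n(K) (all n×n matrices with the commutator bracket) is not a UA-Lie ring: there exists a commutator-preserving bijection from gl_n(K) to itself that is not additive. -/

import Mathlib

private lemma aux_exists_c (K : Type u) [Field K] (hK : 3 ≤ Cardinal.mk K) :
    ∃ c : K, c ≠ 0 ∧ 1 + c ≠ 0 := by
  classical
  by_contra h
  push_neg at h
  have hall : ∀ x : K, x = 0 ∨ x = -1 := by
    intro x
    by_cases hx : x = 0
    · exact Or.inl hx
    · exact Or.inr (eq_neg_of_add_eq_zero_right (h x hx))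
  have hne : (-1 : K) ≠ 0 := neg_ne_zero.mpr one_ne_zero
  have hinj : Function.Injective (fun x : K => ULift.up.{u} (decide (x = 0))) := by
    intro x y hxy
    rcases hall x with hx | hx <;> rcases hall y with hy | hy <;>
      simp [hx, hy, hne, ULift.up_inj] at hxy ⊢
  have h2 : Cardinal.mk K ≤ 2 := by
    have := Cardinal.mk_le_of_injective hinj
    simpa [Cardinal.mk_fintype] using this
  have : (3 : Cardinal) ≤ 2 := hK.trans h2
  norm_num at this

private lemma aux_lie_scalar {K : Type u} [Field K] {n : ℕ}
    (A B : Matrix (Fin n) (Fin n) K) (s t : K) :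
    ⁅A + s • (1 : Matrix (Fin n) (Fin n) K), B + t • 1⁆ = ⁅A, B⁆ := by
  simp [Ring.lie_def, add_mul, mul_add, smul_mul_assoc, mul_smul_comm, smul_smul, mul_comm]
  abel

private lemma aux_trace_lie {K : Type u} [Field K] {n : ℕ}
    (A B : Matrix (Fin n) (Fin n) K) :
    Matrix.trace ⁅A, B⁆ = 0 := by
  simp [Ring.lie_def, Matrix.trace_sub, Matrix.trace_mul_comm A B]

theorem stmt_9 (K : Type*) [Field K] (hK : 3 ≤ Cardinal.mk K)
    (n : ℕ) (hn : 2 ≤ n) :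
    ∃ α : Matrix (Fin n) (Fin n) K → Matrix (Fin n) (Fin n) K,
      Function.Bijective α ∧ (∀ A B, α ⁅A, B⁆ = ⁅α A, α B⁆) ∧
      ¬ (∀ A B, α (A + B) = α A + α B) := by
  classical
  obtain ⟨c, hc0, hc1⟩ := aux_exists_c K hK
  let i0 : Fin n := ⟨0, by omega⟩
  let i1 : Fin n := ⟨1, by omega⟩
  have hi01 : i0 ≠ i1 := by simp [i0, i1, Fin.ext_iff]
  have hone : (1 : Matrix (Fin n) (Fin n) K) ≠ 0 := by
    intro h
    have h2 : (1 : Matrix (Fin n) (Fin n) K) i0 i0 = 0 := by rw [h]; rfl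
    rw [Matrix.one_apply_eq] at h2
    exact one_ne_zero h2
  have htr1 : Matrix.trace (1 : Matrix (Fin n) (Fin n) K) = (n : K) := by
    simp [Matrix.trace_one]
  by_cases hchar : (n : K) = 0
  · -- characteristic divides n
    have hs0 : (1 + c : K) ≠ 0 := hc1
    have htr' : ∀ (A : Matrix (Fin n) (Fin n) K) (x : K),
        Matrix.trace (A + x • 1) = Matrix.trace A := by
      intro A x
      simp [Matrix.trace_add, Matrix.trace_smul, htr1, hchar]
    have htr'' : ∀ (A : Matrix (Fin n) (Fin n) K) (x : K),
        Matrix.trace (A - x • 1) = Matrix.trace A := by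
      intro A x
      simp [Matrix.trace_sub, Matrix.trace_smul, htr1, hchar]
    refine ⟨fun A => A + (if Matrix.trace A = 1 + c then (1 : K) else 0) • 1, ?_, ?_, ?_⟩
    · refine Function.bijective_iff_has_inverse.mpr
        ⟨fun A => A - (if Matrix.trace A = 1 + c then (1 : K) else 0) • 1, ?_, ?_⟩
      · intro A
        beta_reduce
        rw [htr']
        by_cases h : Matrix.trace A = 1 + c
        · simp only [if_pos h]; abel
        · simp [h]
      · intro A
        beta_reduce
        rw [htr'']
        by_cases h : Matrix.trace A = 1 + c
        · simp only [if_pos h]; abel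
        · simp [h]
    · intro A B
      beta_reduce
      rw [aux_lie_scalar, aux_trace_lie, if_neg (Ne.symm hs0)]
      simp
    · intro hadd
      set E : Matrix (Fin n) (Fin n) K := Matrix.diagonal (Pi.single i0 (1 : K)) with hE
      have htrE : Matrix.trace E = 1 := by
        simp [hE, Matrix.trace_diagonal]
      have hB : Matrix.trace (c • E) = c := by simp [Matrix.trace_smul, htrE]
      have hAB : Matrix.trace (E + c • E) = 1 + c := by
        rw [Matrix.trace_add, htrE, hB]
      have h1 : Matrix.trace E ≠ 1 + c := by
        rw [htrE]; intro h; apply hc0; linear_combination -h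
      have h2 : Matrix.trace (c • E) ≠ 1 + c := by
        rw [hB]; intro h
        exact one_ne_zero (by linear_combination -h)
      have key := hadd E (c • E)
      beta_reduce at key
      rw [if_pos hAB, if_neg h1, if_neg h2] at key
      simp only [one_smul, zero_smul, add_zero] at key
      have h3 : (1 : Matrix (Fin n) (Fin n) K) = 0 := by
        have h4 := sub_eq_zero.mpr key
        abel_nf at h4
        simpa using h4
      exact hone h3
  · -- n invertible in K
    set N : Matrix (Fin n) (Fin n) K := Matrix.single i0 i1 (1 : K) with hN
    have hN0 : N ≠ 0 := by
      intro h
      have h2 : N i0 i1 = 0 := by rw [h]; rfl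
      rw [hN, Matrix.single_apply_same] at h2
      exact one_ne_zero h2
    have htrN : Matrix.trace N = 0 :=
      Matrix.trace_single_eq_of_ne i0 i1 (1 : K) hi01
    have htt : ∀ (A : Matrix (Fin n) (Fin n) K) (x : K),
        Matrix.trace (A + x • 1) / (n : K) = Matrix.trace A / n + x := by
      intro A x
      rw [Matrix.trace_add, Matrix.trace_smul, htr1, smul_eq_mul]
      field_simp
    have htt' : ∀ (A : Matrix (Fin n) (Fin n) K) (x : K),
        Matrix.trace (A - x • 1) / (n : K) = Matrix.trace A / n - x := by
      intro A x
      rw [Matrix.trace_sub, Matrix.trace_smul, htr1, smul_eq_mul]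
      field_simp
    have htP : ∀ (A : Matrix (Fin n) (Fin n) K) (x : K),
        (A + x • (1 : Matrix (Fin n) (Fin n) K)) - (Matrix.trace (A + x • (1 : Matrix (Fin n) (Fin n) K)) / n) • (1 : Matrix (Fin n) (Fin n) K)
          = A - (Matrix.trace A / n) • (1 : Matrix (Fin n) (Fin n) K) := by
      intro A x
      rw [htt, add_smul]
      abel
    have htP' : ∀ (A : Matrix (Fin n) (Fin n) K) (x : K),
        (A - x • (1 : Matrix (Fin n) (Fin n) K)) - (Matrix.trace (A - x • (1 : Matrix (Fin n) (Fin n) K)) / n) • (1 : Matrix (Fin n) (Fin n) K)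
          = A - (Matrix.trace A / n) • (1 : Matrix (Fin n) (Fin n) K) := by
      intro A x
      rw [htt', sub_smul]
      abel
    refine ⟨fun A => A + (if A - (Matrix.trace A / n) • 1 = N
        then c * (Matrix.trace A / n) else 0) • 1, ?_, ?_, ?_⟩
    · refine Function.bijective_iff_has_inverse.mpr
        ⟨fun A => A - (if A - (Matrix.trace A / n) • 1 = N
          then (c / (1 + c)) * (Matrix.trace A / n) else 0) • 1, ?_, ?_⟩
      · intro A
        beta_reduce
        rw [htP, htt]
        by_cases h : A - (Matrix.trace A / n) • 1 = N
        · simp only [if_pos h]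
          have he : c / (1 + c) * (Matrix.trace A / n + c * (Matrix.trace A / n))
              = c * (Matrix.trace A / n) := by
            field_simp
          rw [he]; abel
        · simp [h]
      · intro A
        beta_reduce
        rw [htP', htt']
        by_cases h : A - (Matrix.trace A / n) • 1 = N
        · simp only [if_pos h]
          have he : c * (Matrix.trace A / n - c / (1 + c) * (Matrix.trace A / n))
              = c / (1 + c) * (Matrix.trace A / n) := by
            field_simp; ring
          rw [he]; abel
        · simp [h]
    · intro A B
      beta_reduce
      rw [aux_lie_scalar, aux_trace_lie]
      simp
    · intro hadd
      have hPN : N - (Matrix.trace N / n) • 1 = N := by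
        rw [htrN, zero_div, zero_smul, sub_zero]
      have hP1 : ¬ ((1 : Matrix (Fin n) (Fin n) K) - (Matrix.trace (1 : Matrix (Fin n) (Fin n) K) / n) • 1 = N) := by
        rw [htr1, div_self hchar, one_smul, sub_self]
        exact fun h => hN0 h.symm
      have htrN1 : Matrix.trace (N + (1 : Matrix (Fin n) (Fin n) K)) = (n : K) := by
        rw [Matrix.trace_add, htrN, htr1, zero_add]
      have hdiv : Matrix.trace (N + (1 : Matrix (Fin n) (Fin n) K)) / (n : K) = 1 := by
        rw [htrN1, div_self hchar]
      have hPN1 : (N + (1 : Matrix (Fin n) (Fin n) K))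
          - (Matrix.trace (N + (1 : Matrix (Fin n) (Fin n) K)) / n) • 1 = N := by
        rw [hdiv, one_smul, add_sub_cancel_right]
      have key := hadd N 1
      beta_reduce at key
      rw [if_pos hPN1, hdiv, mul_one, if_pos hPN, if_neg hP1, htrN] at key
      simp only [zero_div, mul_zero, zero_smul, add_zero] at key
      have hc1' : c • (1 : Matrix (Fin n) (Fin n) K) = 0 := by
        have h4 := sub_eq_zero.mpr key
        abel_nf at h4
        simpa using h4
      rcases smul_eq_zero.mp hc1' with h | h
      · exact hc0 h
      · exact hone h
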